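/- In the algebra B, the element ω := (5/6)(e₁ + e₂ + e₃) satisfies ω·x = 2x for every x ∈ B and (ω|ω) = 1; hence ω is twice the identity element of B (the conformal vector) and the corresponding central charge 2(ω|ω) equals 2. (The paper misprints the coefficient as 6/5; the correct normalization is 5/6.) -/

import Mathlib

/-- In the 3-dimensional Griess algebra `B` with basis `e₁,e₂,e₃`,
products `eᵢ·eᵢ = 2eᵢ`, `eᵢ·eⱼ = (1/5)(eᵢ+eⱼ−e_k)` for `{i,j,k} = {1,2,3}`,
and form `(eᵢ|eᵢ) = 2/5`, `(eᵢ|eⱼ) = 1/25` (`i ≠ j`), the element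
`ω = (5/6)(e₁+e₂+e₃)` satisfies `ω·x = 2x` for all `x` and `(ω|ω) = 1`;
hence the central charge `2(ω|ω)` equals `2`. -/
theorem stmt_5 {B : Type*} [AddCommGroup B] [Module ℝ B]
    (mul : B →ₗ[ℝ] B →ₗ[ℝ] B) (bf : B →ₗ[ℝ] B →ₗ[ℝ] ℝ)
    (hcomm : ∀ x y, mul x y = mul y x)
    (hsymm : ∀ x y, bf x y = bf y x)
    (e : Module.Basis (Fin 3) ℝ B)
    (hdiag : ∀ i, mul (e i) (e i) = (2 : ℝ) • e i)
    (hoff : ∀ i j k : Fin 3, i ≠ j → j ≠ k → i ≠ k →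
      mul (e i) (e j) = (1/5 : ℝ) • (e i + e j - e k))
    (hbd : ∀ i, bf (e i) (e i) = 2/5)
    (hbo : ∀ i j, i ≠ j → bf (e i) (e j) = 1/25) :
    (∀ x : B, mul ((5/6 : ℝ) • (e 0 + e 1 + e 2)) x = (2 : ℝ) • x) ∧
    bf ((5/6 : ℝ) • (e 0 + e 1 + e 2)) ((5/6 : ℝ) • (e 0 + e 1 + e 2)) = 1 ∧
    2 * bf ((5/6 : ℝ) • (e 0 + e 1 + e 2)) ((5/6 : ℝ) • (e 0 + e 1 + e 2)) = 2 := by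
  have h01 := hoff 0 1 2 (by decide) (by decide) (by decide)
  have h02 := hoff 0 2 1 (by decide) (by decide) (by decide)
  have h12 := hoff 1 2 0 (by decide) (by decide) (by decide)
  have h10 : mul (e 1) (e 0) = (1/5 : ℝ) • (e 0 + e 1 - e 2) := by
    rw [hcomm]; exact h01
  have h20 : mul (e 2) (e 0) = (1/5 : ℝ) • (e 0 + e 2 - e 1) := by
    rw [hcomm]; exact h02
  have h21 : mul (e 2) (e 1) = (1/5 : ℝ) • (e 1 + e 2 - e 0) := by
    rw [hcomm]; exact h12
  have hstep : ∀ j : Fin 3, mul ((5/6 : ℝ) • (e 0 + e 1 + e 2)) (e j)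
      = (5/6 : ℝ) • (mul (e 0) (e j) + mul (e 1) (e j) + mul (e 2) (e j)) := by
    intro j; simp [map_add, smul_add]
  have hb0 : mul ((5/6 : ℝ) • (e 0 + e 1 + e 2)) (e 0) = (2 : ℝ) • e 0 := by
    rw [hstep, hdiag 0, h10, h20]; module
  have hb1 : mul ((5/6 : ℝ) • (e 0 + e 1 + e 2)) (e 1) = (2 : ℝ) • e 1 := by
    rw [hstep, h01, hdiag 1, h21]; module
  have hb2 : mul ((5/6 : ℝ) • (e 0 + e 1 + e 2)) (e 2) = (2 : ℝ) • e 2 := by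
    rw [hstep, h02, h12, hdiag 2]; module
  have hb : ∀ i, mul ((5/6 : ℝ) • (e 0 + e 1 + e 2)) (e i) = (2 : ℝ) • e i := by
    intro i
    fin_cases i
    · exact hb0
    · exact hb1
    · exact hb2
  have key : ∀ x : B, mul ((5/6 : ℝ) • (e 0 + e 1 + e 2)) x = (2 : ℝ) • x := by
    intro x
    have heq : mul ((5/6 : ℝ) • (e 0 + e 1 + e 2)) = (2 : ℝ) • LinearMap.id := by
      apply Module.Basis.ext e
      intro i
      simpa using hb i
    simpa using LinearMap.congr_fun heq x
  have hv : bf ((5/6 : ℝ) • (e 0 + e 1 + e 2)) ((5/6 : ℝ) • (e 0 + e 1 + e 2)) = 1 := by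
    simp only [map_add, map_smul, LinearMap.add_apply, LinearMap.smul_apply,
      hbd, hbo 0 1 (by decide), hbo 0 2 (by decide), hbo 1 2 (by decide),
      hbo 1 0 (by decide), hbo 2 0 (by decide), hbo 2 1 (by decide),
      smul_eq_mul]
    norm_num
  exact ⟨key, hv, by rw [hv]; norm_num⟩
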